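/- Optimality test on a chord: let ι be a nonempty finite index set, q : ι → ℝ², f : ι → ℝ, F(x) = max_{i ∈ ι} (dist(x, q_i) + f_i), and let c, u ∈ ℝ² and t₀ ∈ ℝ. Write x₀ = c + t₀·u. If there exist indices i, j with dist(x₀, q_i) + f_i = F(x₀), dist(x₀, q_j) + f_j = F(x₀), ⟨x₀ − q_i, u⟩ ≥ 0 and ⟨x₀ − q_j, u⟩ ≤ 0, then F(x₀) ≤ F(c + t·u) for all t ∈ ℝ, i.e., x₀ minimizes F along the line. (This is the test 'if the farthest-neighbor directions lie on different sides of the perpendicular to the chord, the point is the constrained center'.) -/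
import Mathlib


open scoped RealInnerProductSpace

lemma norm_le_norm_add_smul_of_inner {E : Type*} [NormedAddCommGroup E]
    [InnerProductSpace ℝ E] (v u : E) (s : ℝ) (hs : 0 ≤ s * ⟪v, u⟫) :
    ‖v‖ ≤ ‖v + s • u‖ := by
  have h : ‖v + s • u‖ ^ 2 = ‖v‖ ^ 2 + 2 * ⟪v, s • u⟫ + ‖s • u‖ ^ 2 :=
    norm_add_sq_real v (s • u)
  rw [real_inner_smul_right] at h
  have h1 : ‖v‖ ^ 2 ≤ ‖v + s • u‖ ^ 2 := by nlinarith [sq_nonneg ‖s • u‖]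
  nlinarith [norm_nonneg v, norm_nonneg (v + s • u)]

/-- Optimality test on a chord: if two farthest indices at `x₀ = c + t₀ • u` have
directions on different sides of the perpendicular to the chord, then `x₀` minimizes
`F` along the line `{c + t • u}`. -/
theorem constrained_center_optimality_test {ι : Type*} [Fintype ι] [Nonempty ι]
    (q : ι → EuclideanSpace ℝ (Fin 2)) (f : ι → ℝ)
    (F : EuclideanSpace ℝ (Fin 2) → ℝ)
    (hF : ∀ x, F x = Finset.univ.sup' Finset.univ_nonempty fun i => dist x (q i) + f i)
    (c u x₀ : EuclideanSpace ℝ (Fin 2)) (t₀ : ℝ) (hx₀ : x₀ = c + t₀ • u)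
    (h : ∃ i j : ι, dist x₀ (q i) + f i = F x₀ ∧ dist x₀ (q j) + f j = F x₀ ∧
      0 ≤ ⟪x₀ - q i, u⟫ ∧ ⟪x₀ - q j, u⟫ ≤ 0) :
    ∀ t : ℝ, F x₀ ≤ F (c + t • u) := by
  obtain ⟨i, j, hi, hj, hiu, hju⟩ := h
  intro t
  have hdecomp : ∀ k : ι, c + t • u - q k = (x₀ - q k) + (t - t₀) • u := by
    intro k
    rw [hx₀]; module
  rcases le_total t₀ t with ht | ht
  · -- use i, move by s = t - t₀ ≥ 0
    have hd : dist x₀ (q i) ≤ dist (c + t • u) (q i) := by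
      rw [dist_eq_norm, dist_eq_norm, hdecomp i]
      exact norm_le_norm_add_smul_of_inner _ _ _
        (mul_nonneg (by linarith) hiu)
    calc F x₀ = dist x₀ (q i) + f i := hi.symm
      _ ≤ dist (c + t • u) (q i) + f i := by linarith
      _ ≤ F (c + t • u) := by
          rw [hF]; exact Finset.le_sup' (fun k => dist (c + t • u) (q k) + f k) (Finset.mem_univ i)
  · have hd : dist x₀ (q j) ≤ dist (c + t • u) (q j) := by
      rw [dist_eq_norm, dist_eq_norm, hdecomp j]
      exact norm_le_norm_add_smul_of_inner _ _ _
        ((by nlinarith : (0:ℝ) ≤ (t - t₀) * ⟪x₀ - q j, u⟫))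
    calc F x₀ = dist x₀ (q j) + f j := hj.symm
      _ ≤ dist (c + t • u) (q j) + f j := by linarith
      _ ≤ F (c + t • u) := by
          rw [hF]; exact Finset.le_sup' (fun k => dist (c + t • u) (q k) + f k) (Finset.mem_univ j)
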